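/- Let Γ be a finite Bayesian game, σ a Nash equilibrium, i a player with type t_i, and τ a strategy profile. Let p^τ_{(i,t_i,a_{−i})} denote the probability that the other players play profile a_{−i} under τ conditioned on i having type t_i, similarly for σ, and let Δ = Σ_{a_{−i}} |p^σ_{(i,t_i,a_{−i})} − p^τ_{(i,t_i,a_{−i})}|. Then i's conditional expected utility satisfies u_i(t_i, τ) ≤ u_i(t_i, σ) + Δ·M, where M is the difference between the maximum and minimum utility in Γ. -/

import Mathlib

open Finset

/-- A probability distribution on a finite type. -/
def IsDist {α : Type*} [Fintype α] (p : α → ℝ) : Prop :=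
  (∀ a, 0 ≤ p a) ∧ ∑ a, p a = 1

/-- Combine an action `ai` for player `i` with an action profile `b` of the other players
into a full action profile. -/
def combine {I : Type*} [DecidableEq I] {A : I → Type*} (i : I) (ai : A i)
    (b : ∀ j : {j : I // j ≠ i}, A j.1) : ∀ j, A j :=
  fun j => if h : j = i then cast (congrArg A h.symm) ai else b ⟨j, h⟩

/-- `condP T A q s i ti b` is the probability that the players other than `i` play the profile
`b` under the strategy profile `s`, conditioned on player `i` having type `ti` (prior `q` over
type profiles). -/
noncomputable def condP {I : Type*} [Fintype I] [DecidableEq I] (T A : I → Type*)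
    [∀ i, Fintype (T i)] [∀ i, Fintype (A i)] [∀ i, DecidableEq (T i)]
    (q : (∀ j, T j) → ℝ) (s : ∀ j, T j → A j → ℝ) (i : I) (ti : T i)
    (b : ∀ j : {j : I // j ≠ i}, A j.1) : ℝ :=
  (∑ t : ∀ j, T j, if t i = ti then q t * ∏ j : {j : I // j ≠ i}, s j.1 (t j.1) (b j) else 0)
    / (∑ t : ∀ j, T j, if t i = ti then q t else 0)

/-- The conditional expected utility of player `i` with type `ti` under strategy profile `s`. -/
noncomputable def uCond {I : Type*} [Fintype I] [DecidableEq I] (T A : I → Type*)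
    [∀ i, Fintype (T i)] [∀ i, Fintype (A i)] [∀ i, DecidableEq (T i)] [∀ i, DecidableEq (A i)]
    (q : (∀ j, T j) → ℝ) (U : ∀ i, T i → (∀ j, A j) → ℝ)
    (s : ∀ j, T j → A j → ℝ) (i : I) (ti : T i) : ℝ :=
  ∑ ai : A i, s i ti ai *
    ∑ b : ∀ j : {j : I // j ≠ i}, A j.1, condP T A q s i ti b * U i ti (combine i ai b)

lemma sum_prod_one' {J : Type*} [Fintype J] [DecidableEq J] (A : J → Type*) [∀ j, Fintype (A j)]
    (f : ∀ j, A j → ℝ) (hf : ∀ j, ∑ a, f j a = 1) :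
    ∑ b : ∀ j, A j, ∏ j, f j (b j) = 1 := by
  rw [← Fintype.piFinset_univ, ← Finset.prod_univ_sum]
  simp [hf]

lemma condP_sum' {I : Type*} [Fintype I] [DecidableEq I] (T A : I → Type*)
    [∀ i, Fintype (T i)] [∀ i, Fintype (A i)] [∀ i, DecidableEq (T i)]
    (q : (∀ j, T j) → ℝ) (s : ∀ j, T j → A j → ℝ) (i : I) (ti : T i)
    (hs : ∀ j t, ∑ a, s j t a = 1)
    (hD : (∑ t : ∀ j, T j, if t i = ti then q t else 0) ≠ 0) :
    ∑ b : ∀ j : {j : I // j ≠ i}, A j.1, condP T A q s i ti b = 1 := by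
  unfold condP
  rw [← Finset.sum_div, div_eq_one_iff_eq hD, Finset.sum_comm]
  apply Finset.sum_congr rfl
  intro t _
  split_ifs with h
  · rw [← Finset.mul_sum, sum_prod_one' _ _ (fun j => hs j.1 (t j.1)), mul_one]
  · simp

theorem stmt10 {I : Type*} [Fintype I] [DecidableEq I] (T A : I → Type*)
    [∀ i, Fintype (T i)] [∀ i, Fintype (A i)] [∀ i, DecidableEq (T i)] [∀ i, DecidableEq (A i)]
    (q : (∀ j, T j) → ℝ) (U : ∀ i, T i → (∀ j, A j) → ℝ)
    (σ τ : ∀ j, T j → A j → ℝ)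
    (hq : IsDist q) (hσ : ∀ j t, IsDist (σ j t)) (hτ : ∀ j t, IsDist (τ j t))
    (i : I) (ti : T i)
    (hNash : ∀ d : A i → ℝ, IsDist d →
      (∑ ai : A i, d ai * ∑ b : ∀ j : {j : I // j ≠ i}, A j.1,
          condP T A q σ i ti b * U i ti (combine i ai b))
        ≤ uCond T A q U σ i ti)
    (Mmin Mmax : ℝ)
    (hMax : IsGreatest {r : ℝ | ∃ (j : I) (t : T j) (a : ∀ k, A k), r = U j t a} Mmax)
    (hMin : IsLeast {r : ℝ | ∃ (j : I) (t : T j) (a : ∀ k, A k), r = U j t a} Mmin) :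
    uCond T A q U τ i ti ≤ uCond T A q U σ i ti +
      (∑ b : ∀ j : {j : I // j ≠ i}, A j.1,
        |condP T A q σ i ti b - condP T A q τ i ti b|) * (Mmax - Mmin) := by
  by_cases hD : (∑ t : ∀ j, T j, if t i = ti then q t else 0) = 0
  · simp [uCond, condP, hD]
  · set pσ : (∀ j : {j : I // j ≠ i}, A j.1) → ℝ := condP T A q σ i ti with hpσ
    set pτ : (∀ j : {j : I // j ≠ i}, A j.1) → ℝ := condP T A q τ i ti with hpτ
    set Δ : ℝ := ∑ b : ∀ j : {j : I // j ≠ i}, A j.1, |pσ b - pτ b| with hΔ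
    have hsumσ : ∑ b, pσ b = 1 := condP_sum' T A q σ i ti (fun j t => (hσ j t).2) hD
    have hsumτ : ∑ b, pτ b = 1 := condP_sum' T A q τ i ti (fun j t => (hτ j t).2) hD
    have key : ∀ ai : A i,
        ∑ b, pτ b * U i ti (combine i ai b)
          ≤ (∑ b, pσ b * U i ti (combine i ai b)) + Δ * (Mmax - Mmin) := by
      intro ai
      rw [← sub_le_iff_le_add']
      have heq : ∑ b, pτ b * U i ti (combine i ai b) - ∑ b, pσ b * U i ti (combine i ai b)
          = ∑ b, (pτ b - pσ b) * (U i ti (combine i ai b) - Mmin) := by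
        have hz : ∑ b, (pτ b - pσ b) * Mmin = 0 := by
          rw [← Finset.sum_mul, Finset.sum_sub_distrib, hsumτ, hsumσ, sub_self, zero_mul]
        rw [← Finset.sum_sub_distrib]
        calc ∑ b, (pτ b * U i ti (combine i ai b) - pσ b * U i ti (combine i ai b))
            = ∑ b, ((pτ b - pσ b) * (U i ti (combine i ai b) - Mmin)
                + (pτ b - pσ b) * Mmin) := by
              apply Finset.sum_congr rfl; intros; ring
          _ = (∑ b, (pτ b - pσ b) * (U i ti (combine i ai b) - Mmin))
                + ∑ b, (pτ b - pσ b) * Mmin := Finset.sum_add_distrib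
          _ = _ := by rw [hz, add_zero]
      rw [heq, hΔ, Finset.sum_mul]
      apply Finset.sum_le_sum
      intro b _
      have hf1 : Mmin ≤ U i ti (combine i ai b) := hMin.2 ⟨i, ti, combine i ai b, rfl⟩
      have hf2 : U i ti (combine i ai b) ≤ Mmax := hMax.2 ⟨i, ti, combine i ai b, rfl⟩
      calc (pτ b - pσ b) * (U i ti (combine i ai b) - Mmin)
          ≤ |pτ b - pσ b| * (U i ti (combine i ai b) - Mmin) :=
            mul_le_mul_of_nonneg_right (le_abs_self _) (by linarith)
        _ ≤ |pτ b - pσ b| * (Mmax - Mmin) :=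
            mul_le_mul_of_nonneg_left (by linarith) (abs_nonneg _)
        _ = |pσ b - pτ b| * (Mmax - Mmin) := by rw [abs_sub_comm]
    have hd : IsDist (τ i ti) := hτ i ti
    have hN := hNash (τ i ti) hd
    calc uCond T A q U τ i ti
        = ∑ ai, τ i ti ai * ∑ b, pτ b * U i ti (combine i ai b) := rfl
      _ ≤ ∑ ai, τ i ti ai * ((∑ b, pσ b * U i ti (combine i ai b)) + Δ * (Mmax - Mmin)) :=
          Finset.sum_le_sum fun ai _ => mul_le_mul_of_nonneg_left (key ai) (hd.1 ai)
      _ = (∑ ai, τ i ti ai * ∑ b, pσ b * U i ti (combine i ai b))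
            + (∑ ai, τ i ti ai) * (Δ * (Mmax - Mmin)) := by
          simp only [mul_add, Finset.sum_add_distrib, Finset.sum_mul]
      _ ≤ uCond T A q U σ i ti + Δ * (Mmax - Mmin) := by
          rw [hd.2, one_mul]; exact add_le_add_left hN _
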